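/- Fix K > 0, q > 0, σ > 0, m ∈ ℝ and set ν := q/K. Define D : ℝ → ℝ by D(z) = (1/Γ(ν))·exp(−z²/4)·∫₀^∞ t^{ν−1}·exp(−z·t − t²/2) dt, and H : ℝ → ℝ by H(x) = exp(K·(x − m/K)²/(2σ²))·D(√(2K)·(x − m/K)/σ). Then H is twice continuously differentiable, H(x) > 0 for all x ∈ ℝ, and H satisfies (σ²/2)·H''(x) + (m − K·x)·H'(x) − q·H(x) = 0 for all x ∈ ℝ. -/

import Mathlib

open MeasureTheory

section Stmt15Aux

open Set Filter

/-- The integral `∫_{(0,∞)} t^p e^{-zt - t²/2} dt`, as a function of the parameter `z`. -/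
noncomputable def Fp (p z : ℝ) : ℝ :=
  ∫ t in Set.Ioi (0:ℝ), t ^ p * Real.exp (-z * t - t ^ 2 / 2)

lemma meas_aux (p c : ℝ) :
    Measurable (fun t : ℝ => t ^ p * Real.exp (c * t - t ^ 2 / 2)) := by
  fun_prop

lemma integ (p c : ℝ) (hp : -1 < p) :
    IntegrableOn (fun t : ℝ => t ^ p * Real.exp (c * t - t ^ 2 / 2)) (Set.Ioi 0) := by
  have base : IntegrableOn
      (fun t : ℝ => Real.exp (c ^ 2) * (t ^ p * Real.exp (-(1/4 : ℝ) * t ^ 2)))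
      (Set.Ioi 0) :=
    (integrableOn_rpow_mul_exp_neg_mul_sq (by norm_num) hp).const_mul _
  refine base.mono' (meas_aux p c).aestronglyMeasurable ?_
  filter_upwards [ae_restrict_mem measurableSet_Ioi] with t ht
  have ht0 : (0:ℝ) < t := ht
  have h1 : c * t - t ^ 2 / 2 ≤ c ^ 2 + -(1/4) * t ^ 2 := by nlinarith [sq_nonneg (c - t/2)]
  have h2 : Real.exp (c * t - t ^ 2 / 2) ≤ Real.exp (c ^ 2) * Real.exp (-(1/4) * t ^ 2) := by
    rw [← Real.exp_add]; exact Real.exp_le_exp.mpr h1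
  rw [Real.norm_eq_abs, abs_mul, abs_of_nonneg (Real.rpow_nonneg ht0.le p),
    abs_of_nonneg (Real.exp_pos _).le]
  calc t ^ p * Real.exp (c * t - t ^ 2 / 2)
      ≤ t ^ p * (Real.exp (c ^ 2) * Real.exp (-(1/4) * t ^ 2)) :=
        mul_le_mul_of_nonneg_left h2 (Real.rpow_nonneg ht0.le p)
    _ = Real.exp (c ^ 2) * (t ^ p * Real.exp (-(1/4) * t ^ 2)) := by ring

lemma hasDerivAt_Fp (p : ℝ) (hp : -1 < p) (z : ℝ) :
    HasDerivAt (Fp p) (-Fp (p+1) z) z := by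
  have hp1 : (-1:ℝ) < p + 1 := by linarith
  have key := hasDerivAt_integral_of_dominated_loc_of_deriv_le
    (μ := volume.restrict (Set.Ioi (0:ℝ)))
    (F := fun z t => t ^ p * Real.exp (-z * t - t ^ 2 / 2))
    (F' := fun z t => -(t ^ (p+1) * Real.exp (-z * t - t ^ 2 / 2)))
    (x₀ := z) (bound := fun t => t ^ (p+1) * Real.exp ((|z|+1) * t - t ^ 2 / 2))
    (Metric.ball_mem_nhds z one_pos)
    (Filter.Eventually.of_forall fun x => (meas_aux p (-x)).aestronglyMeasurable)
    (integ p (-z) hp)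
    ((meas_aux (p+1) (-z)).neg.aestronglyMeasurable)
    ?_ (integ (p+1) (|z|+1) hp1) ?_
  · have h2 : HasDerivAt (fun z => ∫ t in Set.Ioi (0:ℝ), t ^ p * Real.exp (-z * t - t ^ 2 / 2))
        (∫ t in Set.Ioi (0:ℝ), -(t ^ (p+1) * Real.exp (-z * t - t ^ 2 / 2))) z := key.2
    rw [integral_neg] at h2
    exact h2
  · filter_upwards [ae_restrict_mem measurableSet_Ioi] with t ht
    intro x hx
    have ht0 : (0:ℝ) < t := ht
    rw [norm_neg, Real.norm_eq_abs, abs_mul, abs_of_nonneg (Real.rpow_nonneg ht0.le _),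
      abs_of_nonneg (Real.exp_pos _).le]
    have hxz : |x| ≤ |z| + 1 := by
      have := abs_sub_abs_le_abs_sub x z
      have h2 : |x - z| < 1 := by simpa [Real.dist_eq] using Metric.mem_ball.mp hx
      linarith
    have : -x * t - t ^ 2 / 2 ≤ (|z|+1) * t - t ^ 2 / 2 := by
      have : -x * t ≤ (|z|+1) * t := by
        apply mul_le_mul_of_nonneg_right _ ht0.le
        calc -x ≤ |x| := neg_le_abs x
          _ ≤ |z| + 1 := hxz
      linarith
    exact mul_le_mul_of_nonneg_left (Real.exp_le_exp.mpr this) (Real.rpow_nonneg ht0.le _)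
  · filter_upwards [ae_restrict_mem measurableSet_Ioi] with t ht
    intro x _
    have ht0 : (0:ℝ) < t := ht
    have hu : HasDerivAt (fun x : ℝ => -x * t - t ^ 2 / 2) (-t) x := by
      simpa using (((hasDerivAt_id x).neg.mul_const t).sub_const (t ^ 2 / 2))
    have := (hu.exp).const_mul (t ^ p)
    refine this.congr_deriv ?_
    rw [Real.rpow_add_one (ne_of_gt ht0)]
    ring

lemma contDiff_Fp (p : ℝ) (hp : -1 < p) : ContDiff ℝ 2 (Fp p) := by
  have hp1 : (-1:ℝ) < p + 1 := by linarith
  have hp2 : (-1:ℝ) < p + 2 := by linarith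
  have d0 : Differentiable ℝ (Fp p) := fun z => (hasDerivAt_Fp p hp z).differentiableAt
  have e0 : deriv (Fp p) = fun z => -Fp (p+1) z := funext fun z => (hasDerivAt_Fp p hp z).deriv
  have d1 : Differentiable ℝ (fun z => -Fp (p+1) z) :=
    fun z => ((hasDerivAt_Fp (p+1) hp1 z).differentiableAt).neg
  have e1 : deriv (fun z => -Fp (p+1) z) = fun z => Fp (p+2) z := funext fun z => by
    have := ((hasDerivAt_Fp (p+1) hp1 z).fun_neg).deriv
    rw [this, neg_neg, show p + 1 + 1 = p + 2 by ring]
  have dd2 : Differentiable ℝ (Fp (p+2)) := fun z => (hasDerivAt_Fp (p+2) hp2 z).differentiableAt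
  have c2 : Continuous (Fp (p+2)) := dd2.continuous
  rw [show (2 : WithTop ℕ∞) = 1 + 1 by rfl, contDiff_succ_iff_deriv]
  refine ⟨d0, by simp, ?_⟩
  rw [e0, contDiff_one_iff_deriv]
  exact ⟨d1, by rw [e1]; exact c2⟩

lemma Fp_pos (p z : ℝ) (hp : -1 < p) : 0 < Fp p z := by
  rw [Fp, setIntegral_pos_iff_support_of_nonneg_ae]
  · have hsub : Set.Ioi (0:ℝ) ⊆ Function.support
        (fun t : ℝ => t ^ p * Real.exp (-z * t - t ^ 2 / 2)) ∩ Set.Ioi 0 := by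
      intro t ht
      refine ⟨?_, ht⟩
      have ht0 : (0:ℝ) < t := ht
      exact (mul_pos (Real.rpow_pos_of_pos ht0 p) (Real.exp_pos _)).ne'
    calc (0:ENNReal) < volume (Set.Ioi (0:ℝ)) := by simp
      _ ≤ _ := measure_mono hsub
  · filter_upwards [ae_restrict_mem measurableSet_Ioi] with t ht
    exact (mul_pos (Real.rpow_pos_of_pos ht p) (Real.exp_pos _)).le
  · exact integ p (-z) hp

lemma combo_Fp (ν : ℝ) (hν : 0 < ν) (z : ℝ) :
    Fp (ν+1) z + z * Fp ν z - ν * Fp (ν-1) z = 0 := by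
  have hνm : (-1:ℝ) < ν - 1 := by linarith
  have hν0 : (-1:ℝ) < ν := by linarith
  have hν1 : (-1:ℝ) < ν + 1 := by linarith
  set g : ℝ → ℝ := fun t => t ^ ν * Real.exp (-z * t - t ^ 2 / 2) with hg
  set g' : ℝ → ℝ := fun t =>
    ν * (t ^ (ν-1) * Real.exp (-z * t - t ^ 2 / 2)) -
    z * (t ^ ν * Real.exp (-z * t - t ^ 2 / 2)) -
    t ^ (ν+1) * Real.exp (-z * t - t ^ 2 / 2) with hg'
  have hderiv : ∀ t ∈ Set.Ioi (0:ℝ), HasDerivAt g (g' t) t := by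
    intro t ht
    have ht0 : (0:ℝ) < t := ht
    have h1 : HasDerivAt (fun t : ℝ => t ^ ν) (ν * t ^ (ν-1)) t :=
      Real.hasDerivAt_rpow_const (Or.inl ht0.ne')
    have hu : HasDerivAt (fun t : ℝ => -z * t - t ^ 2 / 2) (-z - t) t := by
      have := ((hasDerivAt_id t).const_mul (-z)).fun_sub
        ((hasDerivAt_pow 2 t).div_const 2)
      simpa using this
    have := h1.fun_mul hu.exp
    refine this.congr_deriv ?_
    rw [hg']
    simp only []
    rw [show (ν:ℝ) + 1 = ν + 1 from rfl, Real.rpow_add_one (ne_of_gt ht0)]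
    ring
  have hti : IntegrableOn g' (Set.Ioi (0:ℝ)) := by
    exact (((integ (ν-1) (-z) hνm).const_mul ν).sub ((integ ν (-z) hν0).const_mul z)).sub
      (integ (ν+1) (-z) hν1)
  have hcont : ContinuousWithinAt g (Set.Ici (0:ℝ)) 0 := by
    apply ContinuousWithinAt.mul
    · exact (Real.continuousAt_rpow_const 0 ν (Or.inr hν.le)).continuousWithinAt
    · exact (Continuous.continuousWithinAt (by fun_prop))
  have htends : Filter.Tendsto g Filter.atTop (nhds 0) := by
    have hub := tendsto_rpow_mul_exp_neg_mul_atTop_nhds_zero ν 1 one_pos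
    refine squeeze_zero' ?_ ?_ hub
    · filter_upwards [eventually_ge_atTop (0:ℝ)] with t ht
      exact mul_nonneg (Real.rpow_nonneg ht ν) (Real.exp_pos _).le
    · filter_upwards [eventually_ge_atTop (max 0 (2*(|z|+1)))] with t ht
      have ht0 : (0:ℝ) ≤ t := le_trans (le_max_left _ _) ht
      have ht2 : 2*(|z|+1) ≤ t := le_trans (le_max_right _ _) ht
      apply mul_le_mul_of_nonneg_left _ (Real.rpow_nonneg ht0 ν)
      apply Real.exp_le_exp.mpr
      have hzt : -z * t ≤ |z| * t := mul_le_mul_of_nonneg_right (neg_le_abs z) ht0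
      nlinarith [abs_nonneg z]
  have hFTC := integral_Ioi_of_hasDerivAt_of_tendsto hcont hderiv hti htends
  have hg0 : g 0 = 0 := by
    rw [hg]; simp [Real.zero_rpow (ne_of_gt hν)]
  rw [hg0, sub_zero] at hFTC
  have h1 : IntegrableOn (fun t : ℝ => ν * (t ^ (ν-1) * Real.exp (-z * t - t ^ 2 / 2)))
      (Set.Ioi (0:ℝ)) := (integ (ν-1) (-z) hνm).const_mul ν
  have h2 : IntegrableOn (fun t : ℝ => z * (t ^ ν * Real.exp (-z * t - t ^ 2 / 2)))
      (Set.Ioi (0:ℝ)) := (integ ν (-z) hν0).const_mul z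
  have h3 : IntegrableOn (fun t : ℝ => t ^ (ν+1) * Real.exp (-z * t - t ^ 2 / 2))
      (Set.Ioi (0:ℝ)) := integ (ν+1) (-z) hν1
  have hsplit : ∫ t in Set.Ioi (0:ℝ), g' t =
      ν * Fp (ν-1) z - z * Fp ν z - Fp (ν+1) z := by
    show (∫ t in Set.Ioi (0:ℝ),
        (ν * (t ^ (ν-1) * Real.exp (-z * t - t ^ 2 / 2)) -
         z * (t ^ ν * Real.exp (-z * t - t ^ 2 / 2)) -
         t ^ (ν+1) * Real.exp (-z * t - t ^ 2 / 2))) = _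
    have h12 : IntegrableOn (fun t : ℝ => ν * (t ^ (ν-1) * Real.exp (-z * t - t ^ 2 / 2)) -
        z * (t ^ ν * Real.exp (-z * t - t ^ 2 / 2))) (Set.Ioi (0:ℝ)) := h1.sub h2
    rw [integral_sub h12 h3, integral_sub h1 h2, integral_const_mul, integral_const_mul]
    rfl
  rw [hsplit] at hFTC
  linarith

end Stmt15Aux

/-- with ν = q/K, D the parabolic cylinder function D_{−ν} and
H(x) = exp(K(x − m/K)²/(2σ²))·D(√(2K)(x − m/K)/σ), the function H is C², positive,
and satisfies (σ²/2)H'' + (m − Kx)H' − qH = 0 on ℝ. -/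
theorem stmt_15 (K q σ m : ℝ) (hK : 0 < K) (hq : 0 < q) (hσ : 0 < σ)
    (ν : ℝ) (hν : ν = q / K)
    (D : ℝ → ℝ)
    (hD : ∀ z : ℝ, D z = 1 / Real.Gamma ν * Real.exp (-z ^ 2 / 4) *
      ∫ t in Set.Ioi (0:ℝ), t ^ (ν - 1) * Real.exp (-z * t - t ^ 2 / 2))
    (H : ℝ → ℝ)
    (hH : ∀ x : ℝ, H x = Real.exp (K * (x - m / K) ^ 2 / (2 * σ ^ 2)) *
      D (Real.sqrt (2 * K) * (x - m / K) / σ)) :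
    ContDiff ℝ 2 H ∧ (∀ x : ℝ, 0 < H x) ∧
      ∀ x : ℝ, σ ^ 2 / 2 * deriv (deriv H) x + (m - K * x) * deriv H x - q * H x = 0 := by
  have hνp : 0 < ν := by rw [hν]; positivity
  have hpm : (-1:ℝ) < ν - 1 := by linarith
  have hp0 : (-1:ℝ) < ν := by linarith
  have hKν : K * ν = q := by rw [hν]; field_simp
  set c := 1 / Real.Gamma ν with hc
  have hcpos : 0 < c := one_div_pos.mpr (Real.Gamma_pos_of_pos hνp)
  set a := Real.sqrt (2*K) / σ with ha
  have h2K : (0:ℝ) ≤ 2*K := by positivity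
  have hapos : 0 < a := div_pos (Real.sqrt_pos.mpr (by positivity)) hσ
  have hσ2 : (σ:ℝ) ^ 2 ≠ 0 := pow_ne_zero 2 hσ.ne'
  have ha2 : a ^ 2 = 2 * K / σ ^ 2 := by
    rw [ha, div_pow, Real.sq_sqrt h2K]
  have ha2' : σ ^ 2 * a ^ 2 = 2 * K := by
    rw [ha2]; field_simp
  -- identify H with c * Fp (ν-1) ∘ affine
  have hHG : H = fun x => c * Fp (ν-1) (a * (x - m/K)) := by
    funext x
    rw [hH, hD]
    have hz : Real.sqrt (2*K) * (x - m/K) / σ = a * (x - m/K) := by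
      rw [ha]; ring
    rw [hz]
    have hexp : Real.exp (K * (x - m/K) ^ 2 / (2 * σ ^ 2)) *
        Real.exp (-(a * (x - m/K)) ^ 2 / 4) = 1 := by
      rw [← Real.exp_add, Real.exp_eq_one_iff]
      rw [mul_pow, ha2]
      field_simp
      ring
    have hFp : Fp (ν-1) (a * (x - m/K)) =
        ∫ t in Set.Ioi (0:ℝ), t ^ (ν-1) * Real.exp (-(a * (x - m/K)) * t - t ^ 2 / 2) := rfl
    rw [hFp]
    set I := ∫ t in Set.Ioi (0:ℝ), t ^ (ν-1) * Real.exp (-(a * (x - m/K)) * t - t ^ 2 / 2) with hI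
    linear_combination (c * I) * hexp
  have hl : ∀ x : ℝ, HasDerivAt (fun x : ℝ => a * (x - m/K)) a x := fun x => by
    simpa using ((hasDerivAt_id x).sub_const (m/K)).const_mul a
  have hD1 : ∀ x : ℝ, HasDerivAt H (-(c*a) * Fp ν (a * (x - m/K))) x := by
    intro x
    rw [hHG]
    have := ((hasDerivAt_Fp (ν-1) hpm (a*(x-m/K))).comp x (hl x)).const_mul c
    refine this.congr_deriv ?_
    rw [show ν - 1 + 1 = ν by ring]
    ring
  have hd1 : deriv H = fun x => -(c*a) * Fp ν (a * (x - m/K)) :=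
    funext fun x => (hD1 x).deriv
  have hD2 : ∀ x : ℝ, HasDerivAt (deriv H)
      (-(c*a) * (-Fp (ν+1) (a * (x - m/K)) * a)) x := by
    intro x
    rw [hd1]
    exact ((hasDerivAt_Fp ν hp0 (a*(x-m/K))).comp x (hl x)).const_mul (-(c*a))
  refine ⟨?_, ?_, ?_⟩
  · rw [hHG]
    have hinner : ContDiff ℝ 2 (fun x : ℝ => a * (x - m/K)) :=
      contDiff_const.mul (contDiff_id.sub contDiff_const)
    exact contDiff_const.mul ((contDiff_Fp (ν-1) hpm).comp hinner)
  · intro x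
    rw [hHG]
    exact mul_pos hcpos (Fp_pos _ _ hpm)
  · intro x
    rw [(hD2 x).deriv, (hD1 x).deriv,
      show H x = c * Fp (ν-1) (a * (x - m/K)) from by rw [hHG]]
    have hcombo := combo_Fp ν hνp (a * (x - m/K))
    have hm : K * (m/K) = m := by field_simp
    linear_combination (c*K) * hcombo + (c * Fp (ν+1) (a*(x-m/K)) / 2) * ha2' +
      (c * Fp (ν-1) (a*(x-m/K))) * hKν + (c * a * Fp ν (a*(x-m/K))) * hm
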